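/- Let K be ℝ or ℂ, n ≥ 2, and let G be an abelian subgroup of S_n(K). Suppose the span of F has dimension n−1 and let v_1, …, v_{n−1} ∈ F be vectors spanning F. Then the span of F^(1) has dimension n−2, and moreover some n−2 of the vectors v_1^(1), …, v_{n−1}^(1) are linearly independent (where for x ∈ K^n, x^(1) ∈ K^{n−1} denotes the vector of its first n−1 coordinates). -/

import Mathlib

open Matrix

/-- `B` belongs to `S_N(K)`: lower triangular with all diagonal entries equal. -/
def IsSnMatrix {K : Type*} [Field K] {N : ℕ} (B : Matrix (Fin N) (Fin N) K) : Prop :=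
  (∀ i j : Fin N, i < j → B i j = 0) ∧ (∀ i j : Fin N, B i i = B j j)

/-- The set `F = {(B − μ_B I) eᵢ : 1 ≤ i ≤ N−1, B ∈ G}` for a subgroup `G` of `S_N(K)`
(here `μ_B` is the common diagonal entry of `B`). -/
def Fset {K : Type*} [Field K] {N : ℕ} (G : Subgroup (Matrix.GeneralLinearGroup (Fin N) K)) :
    Set (Fin N → K) :=
  {w | ∃ B ∈ G, ∃ i : Fin N, (i : ℕ) < N - 1 ∧
    w = ((B : Matrix (Fin N) (Fin N) K) -
      (B : Matrix (Fin N) (Fin N) K) i i • (1 : Matrix (Fin N) (Fin N) K)).mulVec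
        (Pi.single i 1)}

/-- The set `F⁽¹⁾ = {(B⁽¹⁾ − μ_B I) e'_k : 1 ≤ k ≤ N−2, B ∈ G}`, where `B⁽¹⁾` denotes the
top-left `(N−1)×(N−1)` block of `B`. -/
def Fset1 {K : Type*} [Field K] {n : ℕ}
    (G : Subgroup (Matrix.GeneralLinearGroup (Fin (n + 2)) K)) : Set (Fin (n + 1) → K) :=
  {w | ∃ B ∈ G, ∃ k : Fin (n + 1), (k : ℕ) < n ∧
    w = (((B : Matrix (Fin (n + 2)) (Fin (n + 2)) K).submatrix Fin.castSucc Fin.castSucc) -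
      (B : Matrix (Fin (n + 2)) (Fin (n + 2)) K) k.castSucc k.castSucc •
        (1 : Matrix (Fin (n + 1)) (Fin (n + 1)) K)).mulVec (Pi.single k 1)}

/-- Let `K = ℝ` or `ℂ`, `N = n + 2 ≥ 2`, and let `G` be an abelian subgroup of `S_N(K)`.
If `span F` has dimension `N − 1` and `v₁, …, v_{N−1} ∈ F` span `F`, then `span F⁽¹⁾` has
dimension `N − 2`, and some `N − 2` of the truncated vectors `v₁⁽¹⁾, …, v_{N−1}⁽¹⁾` (keeping
the first `N − 1` coordinates) are linearly independent. -/
theorem rank_Fset1 {K : Type*} [RCLike K] (n : ℕ)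
    (G : Subgroup (Matrix.GeneralLinearGroup (Fin (n + 2)) K))
    (hGcomm : ∀ A ∈ G, ∀ B ∈ G, A * B = B * A)
    (hS : ∀ B ∈ G, IsSnMatrix (B : Matrix (Fin (n + 2)) (Fin (n + 2)) K))
    (hrank : Module.finrank K (Submodule.span K (Fset G)) = n + 1)
    (v : Fin (n + 1) → (Fin (n + 2) → K))
    (hv : ∀ k, v k ∈ Fset G)
    (hspan : Submodule.span K (Set.range v) = Submodule.span K (Fset G)) :
    Module.finrank K (Submodule.span K (Fset1 G)) = n ∧
    ∃ s : Finset (Fin (n + 1)), s.card = n ∧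
      LinearIndependent K (fun k : s => fun i : Fin (n + 1) => v k i.castSucc) := by
  classical
  set π : (Fin (n+2) → K) →ₗ[K] (Fin (n+1) → K) := LinearMap.funLeft K K Fin.castSucc with hπdef
  set φ : (Fin (n+2) → K) →ₗ[K] K := LinearMap.proj 0 with hφdef
  set ψ : (Fin (n+1) → K) →ₗ[K] K := LinearMap.proj 0 with hψdef
  have hφsurj : LinearMap.range φ = ⊤ := by
    rw [LinearMap.range_eq_top]
    intro y; exact ⟨Pi.single 0 y, by simp [hφdef]⟩
  have hψsurj : LinearMap.range ψ = ⊤ := by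
    rw [LinearMap.range_eq_top]
    intro y; exact ⟨Pi.single 0 y, by simp [hψdef]⟩
  have hkerφ : Module.finrank K (LinearMap.ker φ) = n + 1 := by
    have h := LinearMap.finrank_range_add_finrank_ker φ
    rw [hφsurj] at h
    simp [Module.finrank_pi] at h
    omega
  have hkerψ : Module.finrank K (LinearMap.ker ψ) = n := by
    have h := LinearMap.finrank_range_add_finrank_ker ψ
    rw [hψsurj] at h
    simp [Module.finrank_pi] at h
    omega
  -- every vector in Fset has 0-th coordinate 0
  have hF0 : ∀ w ∈ Fset G, w 0 = 0 := by
    rintro w ⟨B, hB, i, hi, rfl⟩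
    have htri := (hS B hB).1
    simp only [Matrix.mulVec_single_one, Matrix.col_apply, Matrix.sub_apply, Matrix.smul_apply, Matrix.one_apply,
      smul_eq_mul, mul_one]
    rcases eq_or_ne (0 : Fin (n+2)) i with h0 | h0
    · subst h0; simp
    · rw [if_neg h0, htri 0 i (Fin.pos_of_ne_zero (Ne.symm h0))]
      ring
  have hF10 : ∀ w ∈ Fset1 G, w 0 = 0 := by
    rintro w ⟨B, hB, k, hk, rfl⟩
    have htri := (hS B hB).1
    simp only [Matrix.mulVec_single_one, Matrix.col_apply, Matrix.sub_apply, Matrix.smul_apply, Matrix.one_apply,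
      Matrix.submatrix_apply, smul_eq_mul, mul_one]
    rcases eq_or_ne (0 : Fin (n+1)) k with h0 | h0
    · subst h0; simp
    · rw [if_neg h0, Fin.castSucc_zero,
        htri 0 k.castSucc (by
          have : (0 : ℕ) < (k : ℕ) := Nat.pos_of_ne_zero (fun h => h0 (Fin.ext (by simp [h])))
          exact Fin.lt_def.2 (by simpa using this))]
      ring
  have hFeq : Submodule.span K (Fset G) = LinearMap.ker φ := by
    refine Submodule.eq_of_le_of_finrank_eq ?_ (by rw [hrank, hkerφ])
    refine Submodule.span_le.2 fun w hw => ?_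
    simpa [hφdef, LinearMap.mem_ker] using hF0 w hw
  -- image of Fset elements lies in span Fset1
  have himg : ∀ w ∈ Fset G, π w ∈ Submodule.span K (Fset1 G) := by
    rintro w ⟨B, hB, i, hi, rfl⟩
    have htri := (hS B hB).1
    rcases lt_or_ge (i : ℕ) n with hlt | hge
    · apply Submodule.subset_span
      obtain ⟨k, hk⟩ : ∃ k : Fin (n+1), i = k.castSucc :=
        ⟨⟨(i : ℕ), by omega⟩, Fin.ext (by simp)⟩
      subst hk
      refine ⟨B, hB, k, by simpa using hlt, ?_⟩
      funext j
      simp only [hπdef, LinearMap.funLeft_apply, Matrix.mulVec_single_one, Matrix.col_apply, Matrix.sub_apply,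
        Matrix.smul_apply, Matrix.one_apply, Matrix.submatrix_apply, smul_eq_mul, mul_one,
        Fin.castSucc_inj]
    · have hin : (i : ℕ) = n := by omega
      have hz : π ((((B : Matrix (Fin (n+2)) (Fin (n+2)) K)) -
          (B : Matrix (Fin (n+2)) (Fin (n+2)) K) i i •
            (1 : Matrix (Fin (n+2)) (Fin (n+2)) K)).mulVec (Pi.single i 1)) = 0 := by
        funext j
        simp only [hπdef, LinearMap.funLeft_apply, Matrix.mulVec_single_one, Matrix.col_apply, Matrix.sub_apply,
          Matrix.smul_apply, Matrix.one_apply, smul_eq_mul, mul_one, Pi.zero_apply]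
        rcases eq_or_ne (Fin.castSucc j) i with hji | hji
        · rw [hji, if_pos rfl]; ring
        · rw [if_neg hji, htri _ i (by
            have hjn : (j : ℕ) ≠ n := by
              intro h; exact hji (Fin.ext (by simp [h, hin]))
            have : (j : ℕ) < n + 1 := j.isLt
            simp [Fin.lt_def, hin]; omega)]
          ring
      rw [hz]; exact Submodule.zero_mem _
  have hmap : Submodule.map π (LinearMap.ker φ) = LinearMap.ker ψ := by
    apply le_antisymm
    · rintro y ⟨x, hx, rfl⟩
      have hx0 : x 0 = 0 := hx
      simp [hψdef, hπdef, LinearMap.mem_ker, LinearMap.funLeft_apply, Fin.castSucc_zero, hx0]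
    · intro y hy
      have hy0 : y 0 = 0 := hy
      refine ⟨Fin.snoc y 0, ?_, ?_⟩
      · show (Fin.snoc y 0 : Fin (n+2) → K) 0 = 0
        rw [← Fin.castSucc_zero, Fin.snoc_castSucc]
        exact hy0
      · funext j
        simp [hπdef, LinearMap.funLeft_apply, Fin.snoc_castSucc]
  have hFeq1 : Submodule.span K (Fset1 G) = LinearMap.ker ψ := by
    refine le_antisymm (Submodule.span_le.2 fun w hw => ?_) ?_
    · simpa [hψdef, LinearMap.mem_ker] using hF10 w hw
    · have hle : Submodule.map π (Submodule.span K (Fset G)) ≤ Submodule.span K (Fset1 G) := by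
        rw [Submodule.map_span]
        refine Submodule.span_le.2 ?_
        rintro _ ⟨w, hw, rfl⟩
        exact himg w hw
      rwa [hFeq, hmap] at hle
  refine ⟨by rw [hFeq1]; exact hkerψ, ?_⟩
  -- second part
  set wv : Fin (n+1) → (Fin (n+1) → K) := fun k => π (v k) with hwvdef
  have hspanw : Submodule.span K (Set.range wv) = LinearMap.ker ψ := by
    have hr : Set.range wv = π '' Set.range v := by
      rw [← Set.range_comp]; rfl
    rw [hr, ← Submodule.map_span, hspan, hFeq, hmap]
  obtain ⟨t, hts, hspant, hli⟩ := exists_linearIndependent K (Set.range wv)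
  have htfin : t.Finite := Set.Finite.subset (Set.finite_range _) hts
  haveI : Fintype t := htfin.fintype
  have hcardt : t.toFinset.card = n := by
    have h := finrank_span_set_eq_card hli
    rw [hspant, hspanw, hkerψ] at h
    exact h.symm
  choose f hf using fun x : t => hts x.2
  have hfinj : Function.Injective f := by
    intro a b hab
    apply Subtype.ext
    rw [← hf a, ← hf b, hab]
  set s : Finset (Fin (n+1)) := Finset.univ.image f with hsdef
  refine ⟨s, ?_, ?_⟩
  · rw [hsdef, Finset.card_image_of_injective _ hfinj, Finset.card_univ, ← Set.toFinset_card,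
      hcardt]
  · have hwt : ∀ k : s, wv k ∈ t := by
      rintro ⟨k, hk⟩
      rw [hsdef] at hk
      obtain ⟨x, _, rfl⟩ := Finset.mem_image.1 hk
      rw [hf x]; exact x.2
    set g : s → t := fun k => ⟨wv k, hwt k⟩ with hgdef
    have hginj : Function.Injective g := by
      rintro ⟨a, ha⟩ ⟨b, hb⟩ hab
      rw [hsdef] at ha hb
      obtain ⟨x, _, rfl⟩ := Finset.mem_image.1 ha
      obtain ⟨y, _, rfl⟩ := Finset.mem_image.1 hb
      have hxy : wv (f x) = wv (f y) := congrArg Subtype.val hab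
      rw [hf x, hf y] at hxy
      exact Subtype.ext (congrArg f (Subtype.ext hxy))
    have hli2 : LinearIndependent K (fun k : s => wv k) := hli.comp g hginj
    exact hli2
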